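/- Let (B, α, ψ) be a quasi-coaction of a quasi-triangular quasi-bialgebra (A, Δ, φ, R) with automorphism σ preserving Δ, φ, R, and let E ∈ B ⊗ A be a ribbon σ-braid, i.e., E is invertible, E·(id⊗σ)α(b) = α(b)·E for all b ∈ B, and E satisfies the σ-octagon and ribbon equations. If g ∈ A is a group-like element (Δ(g) = g⊗g, with g invertible and (σ' := (Ad g)∘σ) ), then E' = E·(1⊗g^{-1}) is a ribbon σ'-braid for (B, α, ψ) with respect to σ' = (Ad g)∘σ. -/

import Mathlib

open scoped TensorProduct

noncomputable section

variable (k A B : Type*) [CommRing k] [Ring A] [Ring B] [Algebra k A] [Algebra k B]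

/-! Leg-manipulation algebra homomorphisms.  We write `B ⊗ A ⊗ A` for
`B ⊗[k] (A ⊗[k] A)`, with `B` in tensor position `0`. -/

/-- The flip `x ⊗ y ↦ y ⊗ x` on `A ⊗ A`. -/
def swapA : A ⊗[k] A →ₐ[k] A ⊗[k] A := (Algebra.TensorProduct.comm k A A).toAlgHom

/-- Legs `1,3` insertion `A ⊗ A → A ⊗ (A ⊗ A)`. -/
def r13A : A ⊗[k] A →ₐ[k] A ⊗[k] (A ⊗[k] A) :=
  Algebra.TensorProduct.map (AlgHom.id k A)
    (Algebra.TensorProduct.includeRight : A →ₐ[k] A ⊗[k] A)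

/-- Legs `1,2` insertion `A ⊗ A → A ⊗ (A ⊗ A)`. -/
def r12A : A ⊗[k] A →ₐ[k] A ⊗[k] (A ⊗[k] A) :=
  Algebra.TensorProduct.map (AlgHom.id k A)
    (Algebra.TensorProduct.includeLeft : A →ₐ[k] A ⊗[k] A)

/-- Legs `2,3` insertion `A ⊗ A → A ⊗ (A ⊗ A)`. -/
def r23A : A ⊗[k] A →ₐ[k] A ⊗[k] (A ⊗[k] A) :=
  (Algebra.TensorProduct.includeRight : A ⊗[k] A →ₐ[k] A ⊗[k] (A ⊗[k] A))

/-- Leg permutation `x₁⊗x₂⊗x₃ ↦ x₁⊗x₃⊗x₂` of `A ⊗ A ⊗ A`. -/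
def p132 : A ⊗[k] (A ⊗[k] A) →ₐ[k] A ⊗[k] (A ⊗[k] A) :=
  Algebra.TensorProduct.map (AlgHom.id k A) (swapA k A)

/-- Leg permutation `x₁⊗x₂⊗x₃ ↦ x₂⊗x₁⊗x₃` of `A ⊗ A ⊗ A`. -/
def p213 : A ⊗[k] (A ⊗[k] A) →ₐ[k] A ⊗[k] (A ⊗[k] A) :=
  ((Algebra.TensorProduct.assoc k k k A A A).toAlgHom.comp
    (Algebra.TensorProduct.map (swapA k A) (AlgHom.id k A))).comp
      (Algebra.TensorProduct.assoc k k k A A A).symm.toAlgHom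

/-- Leg permutation placing `x₁⊗x₂⊗x₃` as `x₃⊗x₁⊗x₂` (the pattern of `φ₃₁₂`). -/
def p312 : A ⊗[k] (A ⊗[k] A) →ₐ[k] A ⊗[k] (A ⊗[k] A) :=
  (Algebra.TensorProduct.comm k (A ⊗[k] A) A).toAlgHom.comp
    (Algebra.TensorProduct.assoc k k k A A A).symm.toAlgHom

/-- Leg permutation placing `x₁⊗x₂⊗x₃` as `x₂⊗x₃⊗x₁` (the pattern of `φ₂₃₁`). -/
def p231 : A ⊗[k] (A ⊗[k] A) →ₐ[k] A ⊗[k] (A ⊗[k] A) :=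
  (Algebra.TensorProduct.assoc k k k A A A).toAlgHom.comp
    (Algebra.TensorProduct.comm k A (A ⊗[k] A)).toAlgHom

/-- `Δ ⊗ id : A ⊗ A → A ⊗ A ⊗ A`. -/
def dL (Δ : A →ₐ[k] A ⊗[k] A) : A ⊗[k] A →ₐ[k] A ⊗[k] (A ⊗[k] A) :=
  (Algebra.TensorProduct.assoc k k k A A A).toAlgHom.comp
    (Algebra.TensorProduct.map Δ (AlgHom.id k A))

/-- `id ⊗ Δ : A ⊗ A → A ⊗ A ⊗ A`. -/
def dR (Δ : A →ₐ[k] A ⊗[k] A) : A ⊗[k] A →ₐ[k] A ⊗[k] (A ⊗[k] A) :=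
  Algebra.TensorProduct.map (AlgHom.id k A) Δ

/-- `ε ⊗ id : A ⊗ A → A`. -/
def epsL (ε : A →ₐ[k] k) : A ⊗[k] A →ₐ[k] A :=
  (Algebra.TensorProduct.lid k A).toAlgHom.comp
    (Algebra.TensorProduct.map ε (AlgHom.id k A))

/-- `id ⊗ ε : A ⊗ A → A`. -/
def epsR (ε : A →ₐ[k] k) : A ⊗[k] A →ₐ[k] A :=
  (Algebra.TensorProduct.rid k k A).toAlgHom.comp
    (Algebra.TensorProduct.map (AlgHom.id k A) ε)

/-- `ψ ↦ ψ₀₂₁` (flip of the two `A`-legs of `B ⊗ A ⊗ A`). -/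
def flip021 : B ⊗[k] (A ⊗[k] A) →ₐ[k] B ⊗[k] (A ⊗[k] A) :=
  Algebra.TensorProduct.map (AlgHom.id k B) (swapA k A)

/-- Legs `0,2` insertion `B ⊗ A → B ⊗ A ⊗ A`. -/
def b02 : B ⊗[k] A →ₐ[k] B ⊗[k] (A ⊗[k] A) :=
  Algebra.TensorProduct.map (AlgHom.id k B)
    (Algebra.TensorProduct.includeRight : A →ₐ[k] A ⊗[k] A)

/-- Legs `0,1` insertion `B ⊗ A → B ⊗ A ⊗ A`. -/
def b01 : B ⊗[k] A →ₐ[k] B ⊗[k] (A ⊗[k] A) :=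
  Algebra.TensorProduct.map (AlgHom.id k B)
    (Algebra.TensorProduct.includeLeft : A →ₐ[k] A ⊗[k] A)

/-- Legs `1,2` insertion `A ⊗ A → B ⊗ A ⊗ A`. -/
def bR : A ⊗[k] A →ₐ[k] B ⊗[k] (A ⊗[k] A) :=
  (Algebra.TensorProduct.includeRight : A ⊗[k] A →ₐ[k] B ⊗[k] (A ⊗[k] A))

/-- `id ⊗ id ⊗ τ` on `B ⊗ A ⊗ A`, for an algebra map `τ : A → A`. -/
def lastLeg (τ : A →ₐ[k] A) : B ⊗[k] (A ⊗[k] A) →ₐ[k] B ⊗[k] (A ⊗[k] A) :=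
  Algebra.TensorProduct.map (AlgHom.id k B)
    (Algebra.TensorProduct.map (AlgHom.id k A) τ)

/-- `id ⊗ τ ⊗ τ` on `B ⊗ A ⊗ A`. -/
def lastTwoLegs (τ : A →ₐ[k] A) : B ⊗[k] (A ⊗[k] A) →ₐ[k] B ⊗[k] (A ⊗[k] A) :=
  Algebra.TensorProduct.map (AlgHom.id k B) (Algebra.TensorProduct.map τ τ)

/-- `α ⊗ id : B ⊗ A → B ⊗ A ⊗ A`. -/
def alphaExt (α : B →ₐ[k] B ⊗[k] A) : B ⊗[k] A →ₐ[k] B ⊗[k] (A ⊗[k] A) :=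
  (Algebra.TensorProduct.assoc k k k B A A).toAlgHom.comp
    (Algebra.TensorProduct.map α (AlgHom.id k A))

/-- `id ⊗ Δ : B ⊗ A → B ⊗ A ⊗ A`. -/
def deltaB (Δ : A →ₐ[k] A ⊗[k] A) : B ⊗[k] A →ₐ[k] B ⊗[k] (A ⊗[k] A) :=
  Algebra.TensorProduct.map (AlgHom.id k B) Δ

/-- `id ⊗ ε : B ⊗ A → B`. -/
def epsB (ε : A →ₐ[k] k) : B ⊗[k] A →ₐ[k] B :=
  (Algebra.TensorProduct.rid k k B).toAlgHom.comp
    (Algebra.TensorProduct.map (AlgHom.id k B) ε)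

/-- `id ⊗ ε ⊗ id : B ⊗ A ⊗ A → B ⊗ A`. -/
def eps1of2 (ε : A →ₐ[k] k) : B ⊗[k] (A ⊗[k] A) →ₐ[k] B ⊗[k] A :=
  Algebra.TensorProduct.map (AlgHom.id k B) (epsL k A ε)

/-- `id ⊗ id ⊗ ε : B ⊗ A ⊗ A → B ⊗ A`. -/
def eps2of2 (ε : A →ₐ[k] k) : B ⊗[k] (A ⊗[k] A) →ₐ[k] B ⊗[k] A :=
  Algebra.TensorProduct.map (AlgHom.id k B) (epsR k A ε)

/-! Four-leg maps, used for the pentagon axioms. -/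

/-- `1 ⊗ (·) : A ⊗ A ⊗ A → B ⊗ A ⊗ A ⊗ A`. -/
def ins234 : A ⊗[k] (A ⊗[k] A) →ₐ[k] B ⊗[k] (A ⊗[k] (A ⊗[k] A)) :=
  Algebra.TensorProduct.includeRight

/-- `(·) ⊗ 1` in legs `0,1,2` of `B ⊗ A ⊗ A ⊗ A`. -/
def ins012 : B ⊗[k] (A ⊗[k] A) →ₐ[k] B ⊗[k] (A ⊗[k] (A ⊗[k] A)) :=
  Algebra.TensorProduct.map (AlgHom.id k B)
    (Algebra.TensorProduct.map (AlgHom.id k A)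
      (Algebra.TensorProduct.includeLeft : A →ₐ[k] A ⊗[k] A))

/-- `id ⊗ Δ ⊗ id : B ⊗ A ⊗ A → B ⊗ A ⊗ A ⊗ A`. -/
def midDelta (Δ : A →ₐ[k] A ⊗[k] A) :
    B ⊗[k] (A ⊗[k] A) →ₐ[k] B ⊗[k] (A ⊗[k] (A ⊗[k] A)) :=
  Algebra.TensorProduct.map (AlgHom.id k B) (dL k A Δ)

/-- `id ⊗ id ⊗ Δ : B ⊗ A ⊗ A → B ⊗ A ⊗ A ⊗ A`. -/
def lastDelta (Δ : A →ₐ[k] A ⊗[k] A) :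
    B ⊗[k] (A ⊗[k] A) →ₐ[k] B ⊗[k] (A ⊗[k] (A ⊗[k] A)) :=
  Algebra.TensorProduct.map (AlgHom.id k B)
    (Algebra.TensorProduct.map (AlgHom.id k A) Δ)

/-- `α ⊗ id ⊗ id : B ⊗ A ⊗ A → B ⊗ A ⊗ A ⊗ A`. -/
def alphaExt2 (α : B →ₐ[k] B ⊗[k] A) :
    B ⊗[k] (A ⊗[k] A) →ₐ[k] B ⊗[k] (A ⊗[k] (A ⊗[k] A)) :=
  (Algebra.TensorProduct.assoc k k k B A (A ⊗[k] A)).toAlgHom.comp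
    (Algebra.TensorProduct.map α (AlgHom.id k (A ⊗[k] A)))

/-- Pure four-leg maps on `A ⊗ A ⊗ A ⊗ A` for the φ-pentagon. -/
def a234 : A ⊗[k] (A ⊗[k] A) →ₐ[k] A ⊗[k] (A ⊗[k] (A ⊗[k] A)) :=
  Algebra.TensorProduct.includeRight

def a123 : A ⊗[k] (A ⊗[k] A) →ₐ[k] A ⊗[k] (A ⊗[k] (A ⊗[k] A)) :=
  Algebra.TensorProduct.map (AlgHom.id k A)
    (Algebra.TensorProduct.map (AlgHom.id k A)
      (Algebra.TensorProduct.includeLeft : A →ₐ[k] A ⊗[k] A))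

def aD34 (Δ : A →ₐ[k] A ⊗[k] A) :
    A ⊗[k] (A ⊗[k] A) →ₐ[k] A ⊗[k] (A ⊗[k] (A ⊗[k] A)) :=
  Algebra.TensorProduct.map (AlgHom.id k A)
    (Algebra.TensorProduct.map (AlgHom.id k A) Δ)

def aD23 (Δ : A →ₐ[k] A ⊗[k] A) :
    A ⊗[k] (A ⊗[k] A) →ₐ[k] A ⊗[k] (A ⊗[k] (A ⊗[k] A)) :=
  Algebra.TensorProduct.map (AlgHom.id k A) (dL k A Δ)

def aD12 (Δ : A →ₐ[k] A ⊗[k] A) :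
    A ⊗[k] (A ⊗[k] A) →ₐ[k] A ⊗[k] (A ⊗[k] (A ⊗[k] A)) :=
  (Algebra.TensorProduct.assoc k k k A A (A ⊗[k] A)).toAlgHom.comp
    (Algebra.TensorProduct.map Δ (AlgHom.id k (A ⊗[k] A)))

/-- `id ⊗ ε ⊗ id : A ⊗ A ⊗ A → A ⊗ A`. -/
def aEpsMid (ε : A →ₐ[k] k) : A ⊗[k] (A ⊗[k] A) →ₐ[k] A ⊗[k] A :=
  Algebra.TensorProduct.map (AlgHom.id k A) (epsL k A ε)

/-! Auxiliary lemmas for the twisting argument. -/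

lemma mapIdSigma_conj (σ σ' : A →ₐ[k] A) (g ginv : A)
    (hσ' : ∀ x : A, σ' x = g * σ x * ginv) (t : B ⊗[k] A) :
    Algebra.TensorProduct.map (AlgHom.id k B) σ' t =
      ((1 : B) ⊗ₜ[k] g) * Algebra.TensorProduct.map (AlgHom.id k B) σ t *
        ((1 : B) ⊗ₜ[k] ginv) := by
  induction t using TensorProduct.induction_on with
  | zero => simp
  | tmul b a => simp [Algebra.TensorProduct.tmul_mul_tmul, hσ']
  | add x y hx hy => simp [hx, hy, mul_add, add_mul]

lemma lastLeg_conj (σ σ' : A →ₐ[k] A) (g ginv : A)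
    (hσ' : ∀ x : A, σ' x = g * σ x * ginv) (t : B ⊗[k] (A ⊗[k] A)) :
    lastLeg k A B σ' t =
      ((1 : B) ⊗ₜ[k] ((1 : A) ⊗ₜ[k] g)) * lastLeg k A B σ t *
        ((1 : B) ⊗ₜ[k] ((1 : A) ⊗ₜ[k] ginv)) := by
  induction t using TensorProduct.induction_on with
  | zero => simp
  | tmul b s =>
    induction s using TensorProduct.induction_on with
    | zero => simp
    | tmul a1 a2 => simp [lastLeg, Algebra.TensorProduct.tmul_mul_tmul, hσ']
    | add x y hx hy =>
      simp only [TensorProduct.tmul_add, map_add, hx, hy, mul_add, add_mul]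
  | add x y hx hy => simp [hx, hy, mul_add, add_mul]

lemma lastTwoLegs_conj (σ σ' : A →ₐ[k] A) (g ginv : A)
    (hσ' : ∀ x : A, σ' x = g * σ x * ginv) (t : B ⊗[k] (A ⊗[k] A)) :
    lastTwoLegs k A B σ' t =
      ((1 : B) ⊗ₜ[k] (g ⊗ₜ[k] g)) * lastTwoLegs k A B σ t *
        ((1 : B) ⊗ₜ[k] (ginv ⊗ₜ[k] ginv)) := by
  induction t using TensorProduct.induction_on with
  | zero => simp
  | tmul b s =>
    induction s using TensorProduct.induction_on with
    | zero => simp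
    | tmul a1 a2 => simp [lastTwoLegs, Algebra.TensorProduct.tmul_mul_tmul, hσ']
    | add x y hx hy =>
      simp only [TensorProduct.tmul_add, map_add, hx, hy, mul_add, add_mul]
  | add x y hx hy => simp [hx, hy, mul_add, add_mul]

lemma b01_comm_lastLeg (t : B ⊗[k] A) (a : A) :
    b01 k A B t * ((1 : B) ⊗ₜ[k] ((1 : A) ⊗ₜ[k] a)) =
      ((1 : B) ⊗ₜ[k] ((1 : A) ⊗ₜ[k] a)) * b01 k A B t := by
  induction t using TensorProduct.induction_on with
  | zero => simp
  | tmul b x => simp [b01, Algebra.TensorProduct.tmul_mul_tmul]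
  | add x y hx hy => simp [hx, hy, mul_add, add_mul]

set_option maxHeartbeats 2000000 in
/-- **Statement.**  Let `(A, Δ, φ, R)` be a quasi-triangular quasi-bialgebra with counit
`ε`, `σ` an automorphism of `A` preserving `Δ`, `φ` and `R`, and `(B, α, ψ)` a normalized
quasi-coaction of `A` on `B`.  Let `E ∈ B ⊗ A` be a ribbon `σ`-braid: `E` is invertible,
`E·(id⊗σ)α(b) = α(b)·E`, and `E` satisfies the `σ`-octagon relation
`(α⊗id)(E) = ψ⁻¹ R₂₁ ψ₀₂₁ E₀₂ (id⊗id⊗σ)(ψ₀₂₁⁻¹ R₁₂ ψ)` and the ribbon equation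
`(id⊗Δ)(E) = R₂₁ ψ₀₂₁ E₀₂ (id⊗id⊗σ)(ψ₀₂₁⁻¹ R₁₂ ψ) E₀₁ (id⊗σ⊗σ)(ψ⁻¹)`.
If `g ∈ A` is group-like (and invertible), and `σ' = (Ad g)∘σ`, then
`E' = E·(1⊗g⁻¹)` is a ribbon `σ'`-braid for `(B, α, ψ)` with respect to `σ'`. -/
theorem ribbon_braid_groupLike_twist
    (Δ : A →ₐ[k] A ⊗[k] A) (ε : A →ₐ[k] k)
    (φ φinv : A ⊗[k] (A ⊗[k] A)) (R Rinv : A ⊗[k] A)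
    -- quasi-bialgebra axioms for `(A, Δ, φ, ε)`
    (hcounitL : ∀ a : A, epsL k A ε (Δ a) = a)
    (hcounitR : ∀ a : A, epsR k A ε (Δ a) = a)
    (hqcoassoc : ∀ a : A, dR k A Δ (Δ a) * φ = φ * dL k A Δ (Δ a))
    (hφ1 : φ * φinv = 1) (hφ2 : φinv * φ = 1)
    (hφcounit : aEpsMid k A ε φ = 1)
    (hpentφ : aD34 k A Δ φ * aD12 k A Δ φ = a234 k A φ * aD23 k A Δ φ * a123 k A φ)
    -- quasi-triangularity
    (hR1 : R * Rinv = 1) (hR2 : Rinv * R = 1)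
    (hRΔ : ∀ a : A, R * Δ a = swapA k A (Δ a) * R)
    (hhex1 : dL k A Δ R = p312 k A φ * r13A k A R * p132 k A φinv * r23A k A R * φ)
    (hhex2 : dR k A Δ R = p231 k A φinv * r13A k A R * p213 k A φ * r12A k A R * φinv)
    -- the automorphism σ preserves Δ, φ, R
    (σ : A →ₐ[k] A) (hσbij : Function.Bijective σ)
    (hσΔ : ∀ a : A, Δ (σ a) = Algebra.TensorProduct.map σ σ (Δ a))
    (hσφ : Algebra.TensorProduct.map σ (Algebra.TensorProduct.map σ σ) φ = φ)
    (hσR : Algebra.TensorProduct.map σ σ R = R)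
    -- normalized quasi-coaction `(B, α, ψ)`
    (α : B →ₐ[k] B ⊗[k] A) (ψ ψinv : B ⊗[k] (A ⊗[k] A))
    (hψ1 : ψ * ψinv = 1) (hψ2 : ψinv * ψ = 1)
    (hψcounit1 : eps1of2 k A B ε ψ = 1) (hψcounit2 : eps2of2 k A B ε ψ = 1)
    (hpentψ : ins234 k A B φ * midDelta k A B Δ ψ * ins012 k A B ψ =
      lastDelta k A B Δ ψ * alphaExt2 k A B α ψ)
    (hαcoassoc : ∀ b : B, deltaB k A B Δ (α b) * ψ = ψ * alphaExt k A B α (α b))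
    (hαcounit : ∀ b : B, epsB k A B ε (α b) = b)
    -- `E` is a ribbon σ-braid
    (E Einv : B ⊗[k] A)
    (hE1 : E * Einv = 1) (hE2 : Einv * E = 1)
    (hEcomm : ∀ b : B,
      E * Algebra.TensorProduct.map (AlgHom.id k B) σ (α b) = α b * E)
    (hoctagon : alphaExt k A B α E =
      ψinv * bR k A B (swapA k A R) * flip021 k A B ψ * b02 k A B E *
        lastLeg k A B σ (flip021 k A B ψinv * bR k A B R * ψ))
    (hribbon : deltaB k A B Δ E =
      bR k A B (swapA k A R) * flip021 k A B ψ * b02 k A B E *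
        lastLeg k A B σ (flip021 k A B ψinv * bR k A B R * ψ) *
        b01 k A B E * lastTwoLegs k A B σ ψinv)
    -- a group-like element `g` and `σ' = (Ad g) ∘ σ`
    (g ginv : A) (hg : Δ g = g ⊗ₜ[k] g)
    (hg1 : g * ginv = 1) (hg2 : ginv * g = 1)
    (σ' : A →ₐ[k] A) (hσ' : ∀ x : A, σ' x = g * σ x * ginv) :
    -- conclusion: `E' = E(1 ⊗ g⁻¹)` is a ribbon σ'-braid
    let E' : B ⊗[k] A := E * ((1 : B) ⊗ₜ[k] ginv)
    (∃ E'inv : B ⊗[k] A, E' * E'inv = 1 ∧ E'inv * E' = 1) ∧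
    (∀ b : B,
      E' * Algebra.TensorProduct.map (AlgHom.id k B) σ' (α b) = α b * E') ∧
    (alphaExt k A B α E' =
      ψinv * bR k A B (swapA k A R) * flip021 k A B ψ * b02 k A B E' *
        lastLeg k A B σ' (flip021 k A B ψinv * bR k A B R * ψ)) ∧
    (deltaB k A B Δ E' =
      bR k A B (swapA k A R) * flip021 k A B ψ * b02 k A B E' *
        lastLeg k A B σ' (flip021 k A B ψinv * bR k A B R * ψ) *
        b01 k A B E' * lastTwoLegs k A B σ' ψinv) := by
  intro E'
  have hE' : E' = E * ((1 : B) ⊗ₜ[k] ginv) := rfl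
  -- abbreviations
  have huv : ((1 : B) ⊗ₜ[k] ginv) * ((1 : B) ⊗ₜ[k] g) = 1 := by
    rw [Algebra.TensorProduct.tmul_mul_tmul, one_mul, hg2,
      ← Algebra.TensorProduct.one_def]
  have hvu : ((1 : B) ⊗ₜ[k] g) * ((1 : B) ⊗ₜ[k] ginv) = 1 := by
    rw [Algebra.TensorProduct.tmul_mul_tmul, one_mul, hg1,
      ← Algebra.TensorProduct.one_def]
  have hc2G2 : ∀ y : B ⊗[k] (A ⊗[k] A),
      ((1 : B) ⊗ₜ[k] ((1 : A) ⊗ₜ[k] ginv)) *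
        (((1 : B) ⊗ₜ[k] ((1 : A) ⊗ₜ[k] g)) * y) = y := by
    intro y
    rw [← mul_assoc, Algebra.TensorProduct.tmul_mul_tmul,
      Algebra.TensorProduct.tmul_mul_tmul, one_mul, one_mul, hg2]
    rw [← Algebra.TensorProduct.one_def (A := A), ← Algebra.TensorProduct.one_def,
      one_mul]
  have hΔginv : Δ ginv = ginv ⊗ₜ[k] ginv := by
    have h1 : (g ⊗ₜ[k] g) * Δ ginv = 1 := by
      rw [← hg, ← map_mul, hg1, map_one]
    have h2 : (ginv ⊗ₜ[k] ginv) * (g ⊗ₜ[k] g) = 1 := by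
      rw [Algebra.TensorProduct.tmul_mul_tmul, hg2, ← Algebra.TensorProduct.one_def]
    calc Δ ginv = ((ginv ⊗ₜ[k] ginv) * (g ⊗ₜ[k] g)) * Δ ginv := by
          rw [h2, one_mul]
      _ = (ginv ⊗ₜ[k] ginv) * ((g ⊗ₜ[k] g) * Δ ginv) := mul_assoc _ _ _
      _ = ginv ⊗ₜ[k] ginv := by rw [h1, mul_one]
  -- evaluations of the leg maps at the twisting element
  have hb02u : b02 k A B E' = b02 k A B E * ((1 : B) ⊗ₜ[k] ((1 : A) ⊗ₜ[k] ginv)) := by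
    rw [hE', map_mul]
    congr 1
  have hb01u : b01 k A B E' = b01 k A B E * ((1 : B) ⊗ₜ[k] (ginv ⊗ₜ[k] (1 : A))) := by
    rw [hE', map_mul]
    congr 1
  have haeu : alphaExt k A B α E' =
      alphaExt k A B α E * ((1 : B) ⊗ₜ[k] ((1 : A) ⊗ₜ[k] ginv)) := by
    rw [hE', map_mul]
    congr 1
    simp [alphaExt, Algebra.TensorProduct.one_def]
  have hdBu : deltaB k A B Δ E' =
      deltaB k A B Δ E * ((1 : B) ⊗ₜ[k] (ginv ⊗ₜ[k] ginv)) := by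
    rw [hE', map_mul]
    congr 1
    simp [deltaB, hΔginv]
  have hll := lastLeg_conj k A B σ σ' g ginv hσ'
    (flip021 k A B ψinv * bR k A B R * ψ)
  have hlt := lastTwoLegs_conj k A B σ σ' g ginv hσ' ψinv
  refine ⟨⟨((1 : B) ⊗ₜ[k] g) * Einv, ?_, ?_⟩, ?_, ?_, ?_⟩
  · rw [hE', mul_assoc, ← mul_assoc ((1 : B) ⊗ₜ[k] ginv), huv, one_mul, hE1]
  · rw [hE', mul_assoc, ← mul_assoc Einv, hE2, one_mul, hvu]
  · intro b
    rw [hE', mapIdSigma_conj k A B σ σ' g ginv hσ' (α b)]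
    simp only [mul_assoc]
    rw [← mul_assoc ((1 : B) ⊗ₜ[k] ginv), huv, one_mul, ← mul_assoc E, hEcomm b,
      mul_assoc]
  · rw [haeu, hb02u, hll, hoctagon]
    simp only [mul_assoc]
    rw [hc2G2]
  · rw [hdBu, hb02u, hb01u, hll, hlt, hribbon]
    simp only [mul_assoc]
    rw [hc2G2]
    rw [show ∀ y : B ⊗[k] (A ⊗[k] A),
        ((1 : B) ⊗ₜ[k] ((1 : A) ⊗ₜ[k] ginv)) * (b01 k A B E * y) =
          b01 k A B E * (((1 : B) ⊗ₜ[k] ((1 : A) ⊗ₜ[k] ginv)) * y) from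
      fun y => by rw [← mul_assoc, ← b01_comm_lastLeg, mul_assoc]]
    rw [show ∀ y : B ⊗[k] (A ⊗[k] A),
        ((1 : B) ⊗ₜ[k] ((1 : A) ⊗ₜ[k] ginv)) * (((1 : B) ⊗ₜ[k] (ginv ⊗ₜ[k] (1 : A))) *
          (((1 : B) ⊗ₜ[k] (g ⊗ₜ[k] g)) * y)) = y from ?_]
    intro y
    rw [← mul_assoc, Algebra.TensorProduct.tmul_mul_tmul,
      Algebra.TensorProduct.tmul_mul_tmul, ← mul_assoc,
      Algebra.TensorProduct.tmul_mul_tmul, Algebra.TensorProduct.tmul_mul_tmul]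
    simp only [one_mul, mul_one, hg2]
    rw [← Algebra.TensorProduct.one_def (A := A), ← Algebra.TensorProduct.one_def,
      one_mul]

end
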